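/- Lieb's lemma on prescribed occupation numbers: let N ≤ J be positive integers and let λ : Fin J → ℝ satisfy 0 ≤ λ_j ≤ 1 for every j and Σ_{j=1}^J λ_j = N. Then there exists an orthonormal family of N vectors G^{(1)}, …, G^{(N)} in ℂ^J such that Σ_{n=1}^N |G^{(n)}_j|² = λ_j for every j ∈ {1,…,J}. -/

import Mathlib

open Finset ComplexConjugate
open scoped InnerProductSpace

noncomputable section LiebAux

def LiebSol (N J : ℕ) (lam : Fin J → ℝ) : Prop :=
  ∃ G : Fin N → EuclideanSpace ℂ (Fin J), Orthonormal ℂ G ∧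
    ∀ j : Fin J, ∑ n : Fin N, ‖G n j‖ ^ 2 = lam j

lemma lieb_inner_eq (J : ℕ) (x y : EuclideanSpace ℂ (Fin J)) :
    ⟪x, y⟫_ℂ = ∑ j, conj (x j) * y j := by
  simp [PiLp.inner_apply, RCLike.inner_apply]
  exact Finset.sum_congr rfl fun _ _ => mul_comm _ _

lemma lieb_normsq_eq (z : ℂ) : ‖z‖ ^ 2 = (conj z * z).re := by
  rw [mul_comm, Complex.mul_conj, Complex.ofReal_re, ← Complex.sq_norm]

end LiebAux

section LiebAux2
open Finset ComplexConjugate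
open scoped InnerProductSpace

def liebExt {J : ℕ} (b : Fin (J + 1)) (v : EuclideanSpace ℂ (Fin J)) :
    EuclideanSpace ℂ (Fin (J + 1)) := WithLp.toLp 2 (Fin.insertNth b (0 : ℂ) v.ofLp)

@[simp] lemma liebExt_same {J : ℕ} (b : Fin (J + 1)) (v : EuclideanSpace ℂ (Fin J)) :
    liebExt b v b = 0 := by simp [liebExt]

@[simp] lemma liebExt_succAbove {J : ℕ} (b : Fin (J + 1)) (v : EuclideanSpace ℂ (Fin J))
    (k : Fin J) : liebExt b v (b.succAbove k) = v k := by simp [liebExt]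

lemma lieb_ext_inner {J : ℕ} (b : Fin (J + 1)) (v w : EuclideanSpace ℂ (Fin J)) :
    ⟪liebExt b v, liebExt b w⟫_ℂ = ⟪v, w⟫_ℂ := by
  rw [lieb_inner_eq, lieb_inner_eq, Fin.sum_univ_succAbove _ b]
  simp

lemma lieb_drop_zero {J N : ℕ} (b : Fin (J + 1)) (lam : Fin (J + 1) → ℝ) (hb : lam b = 0)
    (h : LiebSol N J (fun j => lam (b.succAbove j))) : LiebSol N (J + 1) lam := by
  obtain ⟨G, hG, hs⟩ := h
  refine ⟨fun n => liebExt b (G n), ?_, ?_⟩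
  · rw [orthonormal_iff_ite] at hG ⊢
    intro i j
    rw [lieb_ext_inner]
    exact hG i j
  · intro j
    rcases eq_or_ne j b with rfl | hj
    · simp [hb]
    · obtain ⟨k, rfl⟩ := Fin.exists_succAbove_eq hj
      simpa using hs k
end LiebAux2

section LiebAux3
open Finset ComplexConjugate
open scoped InnerProductSpace

lemma lieb_peel_one {J N : ℕ} (a : Fin (J + 1)) (lam : Fin (J + 1) → ℝ) (ha : lam a = 1)
    (h : LiebSol N J (fun j => lam (a.succAbove j))) : LiebSol (N + 1) (J + 1) lam := by
  obtain ⟨G, hG, hs⟩ := h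
  refine ⟨Fin.snoc (fun n => liebExt a (G n)) (EuclideanSpace.single a 1), ?_, ?_⟩
  · rw [orthonormal_iff_ite] at hG ⊢
    intro i j
    induction i using Fin.lastCases with
    | last =>
      induction j using Fin.lastCases with
      | last => simp [Fin.snoc_last, EuclideanSpace.inner_single_left]
      | cast j' =>
        simp only [Fin.snoc_last, Fin.snoc_castSucc]
        rw [EuclideanSpace.inner_single_left]
        simp [(Fin.castSucc_lt_last j').ne']
    | cast i' =>
      induction j using Fin.lastCases with
      | last =>
        simp only [Fin.snoc_last, Fin.snoc_castSucc]
        rw [EuclideanSpace.inner_single_right]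
        simp [(Fin.castSucc_lt_last i').ne]
      | cast j' =>
        simp only [Fin.snoc_castSucc]
        rw [lieb_ext_inner, hG i' j']
        by_cases hij : i' = j' <;> simp [hij, Fin.castSucc_inj]
  · intro j
    rcases eq_or_ne j a with rfl | hj
    · rw [Fin.sum_univ_castSucc]
      simp [ha]
    · obtain ⟨k, rfl⟩ := Fin.exists_succAbove_eq hj
      rw [Fin.sum_univ_castSucc]
      simpa [Fin.succAbove_ne a k] using hs k
end LiebAux3

section LiebAux4
open Finset ComplexConjugate
open scoped InnerProductSpace

lemma lieb_conj_mul (z : ℂ) : conj z * z = ((‖z‖ ^ 2 : ℝ) : ℂ) := by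
  rw [mul_comm, Complex.mul_conj, Complex.sq_norm]

lemma lieb_cross_zero {N J : ℕ} {G : Fin N → EuclideanSpace ℂ (Fin J)}
    (hG : Orthonormal ℂ G) {a b : Fin J} (hab : a ≠ b)
    (ha : ∑ n, ‖G n a‖ ^ 2 = 1) :
    ∑ n, conj (G n a) * G n b = 0 := by
  set w : EuclideanSpace ℂ (Fin J) := ∑ n, conj (G n a) • G n with hw
  have hwapp : ∀ j, w j = ∑ n, conj (G n a) * G n j := by
    intro j
    rw [hw]
    rw [show ((∑ n, conj (G n a) • G n : EuclideanSpace ℂ (Fin J)) j)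
        = ∑ n, (conj (G n a) • G n) j from by rw [WithLp.ofLp_sum, Finset.sum_apply]]
    simp [PiLp.smul_apply, smul_eq_mul]
  have hwa : w a = 1 := by
    rw [hwapp]
    rw [Finset.sum_congr rfl fun n _ => lieb_conj_mul (G n a),
      ← Complex.ofReal_sum, ha, Complex.ofReal_one]
  have hnw : ‖w‖ ^ 2 = 1 := by
    have h1 : ⟪w, w⟫_ℂ = 1 := by
      rw [hw, inner_sum]
      have : ∀ n ∈ Finset.univ (α := Fin N),
          ⟪∑ m, conj (G m a) • G m, conj (G n a) • G n⟫_ℂ = conj (G n a) * G n a := by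
        intro n _
        rw [inner_smul_right, sum_inner]
        have h2 : ∀ m ∈ Finset.univ (α := Fin N),
            ⟪conj (G m a) • G m, G n⟫_ℂ = G m a * (if m = n then 1 else 0) := by
          intro m _
          rw [inner_smul_left, orthonormal_iff_ite.mp hG m n]
          simp
        rw [Finset.sum_congr rfl h2]
        simp [mul_comm]
      rw [Finset.sum_congr rfl this]
      rw [Finset.sum_congr rfl fun n _ => lieb_conj_mul (G n a),
        ← Complex.ofReal_sum, ha, Complex.ofReal_one]
    have h2 := InnerProductSpace.norm_sq_eq_re_inner (𝕜 := ℂ) w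
    rw [h1] at h2
    simpa using h2
  have hsumle : ‖w a‖ ^ 2 + ‖w b‖ ^ 2 ≤ ∑ j, ‖w j‖ ^ 2 := by
    have hp : ∑ j ∈ ({a, b} : Finset (Fin J)), ‖w j‖ ^ 2 = ‖w a‖ ^ 2 + ‖w b‖ ^ 2 :=
      Finset.sum_pair hab
    rw [← hp]
    exact Finset.sum_le_sum_of_subset_of_nonneg (Finset.subset_univ _)
      (fun j _ _ => by positivity)
  have hnorm : ∑ j, ‖w j‖ ^ 2 = 1 := by
    rw [← hnw, EuclideanSpace.norm_eq]
    rw [Real.sq_sqrt (by positivity)]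
  rw [hnorm, hwa] at hsumle
  simp only [norm_one, one_pow] at hsumle
  have : ‖w b‖ ^ 2 ≤ 0 := by linarith
  have hwb : w b = 0 := by
    have h0 : ‖w b‖ ^ 2 = 0 := le_antisymm (by linarith) (by positivity)
    simpa using (pow_eq_zero_iff (n := 2) (by norm_num)).mp h0
  rw [← hwapp]
  exact hwb
end LiebAux4

section LiebAux5
open Finset ComplexConjugate
open scoped InnerProductSpace

def liebRot {J : ℕ} (a b : Fin J) (α β : ℝ) (v : EuclideanSpace ℂ (Fin J)) :
    EuclideanSpace ℂ (Fin J) :=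
  WithLp.toLp 2 (fun j => if j = a then (α : ℂ) * v a + (β : ℂ) * v b
    else if j = b then -(β : ℂ) * v a + (α : ℂ) * v b else v j)

lemma lieb_split {J : ℕ} {M : Type*} [AddCommMonoid M] {a b : Fin J} (hab : a ≠ b)
    (f : Fin J → M) :
    ∑ j, f j = f a + f b + ∑ j ∈ (Finset.univ.erase a).erase b, f j := by
  rw [← Finset.add_sum_erase _ f (Finset.mem_univ a),
    ← Finset.add_sum_erase _ f (Finset.mem_erase.mpr ⟨hab.symm, Finset.mem_univ b⟩), add_assoc]

lemma lieb_rot_inner {J : ℕ} (a b : Fin J) (hab : a ≠ b) (α β : ℝ) (hαβ : α^2 + β^2 = 1)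
    (x y : EuclideanSpace ℂ (Fin J)) :
    ⟪liebRot a b α β x, liebRot a b α β y⟫_ℂ = ⟪x, y⟫_ℂ := by
  have hc : (α : ℂ)^2 + (β : ℂ)^2 = 1 := by exact_mod_cast hαβ
  rw [lieb_inner_eq, lieb_inner_eq,
    lieb_split hab (fun j => conj (liebRot a b α β x j) * liebRot a b α β y j),
    lieb_split hab (fun j => conj (x j) * y j)]
  have hrest : ∑ j ∈ (Finset.univ.erase a).erase b, conj (liebRot a b α β x j) * liebRot a b α β y j
      = ∑ j ∈ (Finset.univ.erase a).erase b, conj (x j) * y j := by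
    refine Finset.sum_congr rfl fun j hj => ?_
    obtain ⟨hjb, hja, -⟩ : j ≠ b ∧ j ≠ a ∧ j ∈ Finset.univ := by
      simpa [Finset.mem_erase] using hj
    simp [liebRot, hja, hjb]
  rw [hrest]
  congr 1
  simp only [liebRot, WithLp.ofLp_toLp, eq_self_iff_true, if_true, if_pos rfl, if_neg hab, if_neg hab.symm, map_add,
    map_mul, Complex.conj_ofReal, map_neg]
  linear_combination (conj (x a) * y a + conj (x b) * y b) * hc

lemma lieb_normsq_re (z : ℂ) : ‖z‖ ^ 2 = (z * conj z).re := by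
  rw [Complex.mul_conj]
  simp [Complex.sq_norm]

lemma lieb_norm_combo (α β : ℝ) (z w : ℂ) :
    ‖(α : ℂ) * z + (β : ℂ) * w‖ ^ 2
      = α^2 * ‖z‖^2 + β^2 * ‖w‖^2 + 2*α*β*(z * conj w).re := by
  have key : ((α:ℂ)*z + (β:ℂ)*w) * conj ((α:ℂ)*z + (β:ℂ)*w)
      = ((α^2 : ℝ) : ℂ) * (z * conj z) + ((β^2 : ℝ) : ℂ) * (w * conj w)
        + ((α*β : ℝ) : ℂ) * (z * conj w + conj (z * conj w)) := by
    simp only [map_add, map_mul, Complex.conj_ofReal, Complex.conj_conj]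
    push_cast
    ring
  rw [lieb_normsq_re, key]
  rw [Complex.add_re, Complex.add_re, Complex.re_ofReal_mul, Complex.re_ofReal_mul,
    Complex.re_ofReal_mul, Complex.add_conj]
  rw [← lieb_normsq_re, ← lieb_normsq_re, Complex.ofReal_re]
  ring

lemma lieb_rotate {N J : ℕ} (a b : Fin J) (hab : a ≠ b) (α β : ℝ) (hαβ : α^2 + β^2 = 1)
    {G : Fin N → EuclideanSpace ℂ (Fin J)} (hG : Orthonormal ℂ G)
    (hcross : ∑ n, conj (G n a) * G n b = 0) (lam : Fin J → ℝ)
    (hla : α^2 * (∑ n, ‖G n a‖^2) + β^2 * (∑ n, ‖G n b‖^2) = lam a)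
    (hlb : β^2 * (∑ n, ‖G n a‖^2) + α^2 * (∑ n, ‖G n b‖^2) = lam b)
    (hother : ∀ j, j ≠ a → j ≠ b → ∑ n, ‖G n j‖^2 = lam j) :
    LiebSol N J lam := by
  have hcross' : ∑ n, (G n a * conj (G n b)).re = 0 := by
    have h1 : ∑ n, G n a * conj (G n b) = conj (∑ n, conj (G n a) * G n b) := by
      rw [map_sum]
      exact Finset.sum_congr rfl fun n _ => by
        rw [map_mul, Complex.conj_conj, mul_comm]
    have h2 : ∑ n, (G n a * conj (G n b)).re = (∑ n, G n a * conj (G n b)).re := by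
      rw [Complex.re_sum]
    rw [h2, h1, hcross]
    simp
  refine ⟨fun n => liebRot a b α β (G n), ?_, ?_⟩
  · rw [orthonormal_iff_ite] at hG ⊢
    intro i j
    rw [lieb_rot_inner a b hab α β hαβ]
    exact hG i j
  · intro j
    rcases eq_or_ne j a with rfl | hja
    · have : ∀ n, liebRot j b α β (G n) j = (α : ℂ) * G n j + (β : ℂ) * G n b := by
        intro n; simp [liebRot]
      simp only [this, lieb_norm_combo]
      rw [Finset.sum_add_distrib, Finset.sum_add_distrib, ← Finset.mul_sum, ← Finset.mul_sum,
        ← Finset.mul_sum, hcross']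
      rw [← hla]; ring
    rcases eq_or_ne j b with rfl | hjb
    · have : ∀ n, liebRot a j α β (G n) j = ((-β : ℝ) : ℂ) * G n a + (α : ℂ) * G n j := by
        intro n; simp [liebRot, hja]
      simp only [this, lieb_norm_combo]
      rw [Finset.sum_add_distrib, Finset.sum_add_distrib, ← Finset.mul_sum, ← Finset.mul_sum,
        ← Finset.mul_sum, hcross']
      rw [← hlb]; ring
    · have : ∀ n, liebRot a b α β (G n) j = G n j := by
        intro n; simp [liebRot, hja, hjb]
      simp only [this]
      exact hother j hja hjb
end LiebAux5

section LiebMain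
open Finset ComplexConjugate
open scoped InnerProductSpace

lemma lieb_main (J : ℕ) : ∀ N : ℕ, N ≤ J → ∀ lam : Fin J → ℝ, (∀ j, 0 ≤ lam j) →
    (∀ j, lam j ≤ 1) → ∑ j, lam j = (N : ℝ) → LiebSol N J lam := by
  induction J using Nat.strong_induction_on with
  | _ J ih =>
  intro N hNJ lam h0 h1 hsum
  rcases Nat.eq_zero_or_pos N with rfl | hN
  · have hz : ∀ j, lam j = 0 := by
      intro j
      have h := (Finset.sum_eq_zero_iff_of_nonneg (fun j _ => h0 j)).mp (by simpa using hsum)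
      exact h j (Finset.mem_univ j)
    exact ⟨fun n => 0, by rw [orthonormal_iff_ite]; exact fun i => i.elim0,
      fun j => by simpa using (hz j).symm⟩
  obtain ⟨N', rfl⟩ : ∃ N', N = N' + 1 := ⟨N - 1, (Nat.succ_pred_eq_of_pos hN).symm⟩
  obtain ⟨J', rfl⟩ : ∃ J'', J = J'' + 1 :=
    ⟨J - 1, (Nat.succ_pred_eq_of_pos (lt_of_lt_of_le hN hNJ)).symm⟩
  by_cases hone : ∃ a, lam a = 1
  · obtain ⟨a, ha⟩ := hone
    refine lieb_peel_one a lam ha (ih J' (Nat.lt_succ_self _) N'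
      (Nat.succ_le_succ_iff.mp hNJ) _ (fun j => h0 _) (fun j => h1 _) ?_)
    have hsplit := Fin.sum_univ_succAbove lam a
    rw [hsplit, ha] at hsum
    push_cast at hsum ⊢
    linarith
  push_neg at hone
  have hlt : ∀ a, lam a < 1 := fun a => lt_of_le_of_ne (h1 a) (hone a)
  have hNJ' : N' + 1 < J' + 1 := by
    rcases lt_or_eq_of_le hNJ with h | h
    · exact h
    · exfalso
      have h2 : ∑ j, lam j < ∑ _j : Fin (J' + 1), (1 : ℝ) :=
        Finset.sum_lt_sum_of_nonempty ⟨0, Finset.mem_univ 0⟩ (fun j _ => hlt j)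
      rw [hsum] at h2
      simp only [Finset.sum_const, Finset.card_univ, Fintype.card_fin, nsmul_eq_mul,
        mul_one] at h2
      rw [h] at h2
      exact absurd h2 (lt_irrefl _)
  have hJ2 : 1 ≤ J' := by omega
  set a : Fin (J' + 1) := ⟨0, by omega⟩ with ha_def
  set b : Fin (J' + 1) := ⟨1, by omega⟩ with hb_def
  have hab : a ≠ b := by simp [ha_def, hb_def, Fin.ext_iff]
  set s : ℝ := lam a + lam b with hs_def
  have hs2 : s < 2 := by have := hlt a; have := hlt b; simp only [hs_def]; linarith
  by_cases hs : s ≤ 1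
  · -- merge into (s, 0)
    set lam' : Fin (J' + 1) → ℝ := fun j => if j = a then s else if j = b then 0 else lam j
      with hlam'_def
    have hsum' : ∑ j, lam' j = ∑ j, lam j := by
      rw [lieb_split hab lam', lieb_split hab lam]
      have hrest : ∑ j ∈ (Finset.univ.erase a).erase b, lam' j
          = ∑ j ∈ (Finset.univ.erase a).erase b, lam j := by
        refine Finset.sum_congr rfl fun j hj => ?_
        obtain ⟨hjb, hja, -⟩ : j ≠ b ∧ j ≠ a ∧ j ∈ Finset.univ := by
          simpa [Finset.mem_erase] using hj
        simp [hlam'_def, hja, hjb]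
      rw [hrest]
      simp [hlam'_def, hab, hab.symm, hs_def]
    have h0' : ∀ j, 0 ≤ lam' j := by
      intro j
      simp only [hlam'_def]
      split_ifs
      · exact add_nonneg (h0 a) (h0 b)
      · exact le_refl 0
      · exact h0 j
    have h1' : ∀ j, lam' j ≤ 1 := by
      intro j
      simp only [hlam'_def]
      split_ifs
      · exact hs
      · exact zero_le_one
      · exact h1 j
    have hb0 : lam' b = 0 := by simp [hlam'_def, hab.symm]
    have hsol' : LiebSol (N' + 1) (J' + 1) lam' := by
      refine lieb_drop_zero b lam' hb0 (ih J' (Nat.lt_succ_self _) (N' + 1) (by omega) _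
        (fun j => h0' _) (fun j => h1' _) ?_)
      have hsp := Fin.sum_univ_succAbove lam' b
      rw [hsum', hsum, hb0] at hsp
      linarith [hsp]
    rcases eq_or_lt_of_le (add_nonneg (h0 a) (h0 b) : (0:ℝ) ≤ lam a + lam b) with hs0 | hs0
    · have ha0 : lam a = 0 := by have := h0 a; have := h0 b; linarith
      have hb0' : lam b = 0 := by have := h0 a; have := h0 b; linarith
      have hlam_eq : lam' = lam := by
        funext j
        simp only [hlam'_def]
        split_ifs with hja hjb
        · rw [hja, hs_def, ha0, hb0']; norm_num
        · rw [hjb, hb0']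
        · rfl
      rwa [hlam_eq] at hsol'
    · rw [← hs_def] at hs0
      obtain ⟨G, hG, hsums⟩ := hsol'
      have hGb : ∀ n, G n b = 0 := by
        intro n
        have h := hsums b
        rw [hb0] at h
        have hterm : ‖G n b‖ ^ 2 = 0 := by
          have hle : ‖G n b‖ ^ 2 ≤ ∑ m, ‖G m b‖ ^ 2 :=
            Finset.single_le_sum (f := fun m => ‖G m b‖ ^ 2) (fun m _ => by positivity)
              (Finset.mem_univ n)
          have hge : (0:ℝ) ≤ ‖G n b‖ ^ 2 := by positivity
          linarith
        simpa using (pow_eq_zero_iff (n := 2) (by norm_num)).mp hterm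
      have hsa : ∑ n, ‖G n a‖ ^ 2 = s := by rw [hsums a]; simp [hlam'_def]
      have hsb : ∑ n, ‖G n b‖ ^ 2 = 0 := by rw [hsums b]; exact hb0
      have hα2 : Real.sqrt (lam a / s) ^ 2 = lam a / s :=
        Real.sq_sqrt (div_nonneg (h0 a) hs0.le)
      have hβ2 : Real.sqrt (lam b / s) ^ 2 = lam b / s :=
        Real.sq_sqrt (div_nonneg (h0 b) hs0.le)
      refine lieb_rotate a b hab (Real.sqrt (lam a / s)) (Real.sqrt (lam b / s)) ?_ hG ?_
        lam ?_ ?_ ?_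
      · rw [hα2, hβ2, ← add_div, hs_def, div_self (by rw [← hs_def]; exact hs0.ne')]
      · simp [hGb]
      · rw [hsa, hsb, hα2, hβ2]
        field_simp
        ring
      · rw [hsa, hsb, hα2, hβ2]
        field_simp
        ring
      · intro j hja hjb
        rw [hsums j]
        simp [hlam'_def, hja, hjb]
  · -- s > 1 case
    have hs1 : 1 < s := not_le.mp hs
    set lam' : Fin (J' + 1) → ℝ := fun j => if j = a then 1 else if j = b then s - 1 else lam j
      with hlam'_def
    have hsum' : ∑ j, lam' j = ∑ j, lam j := by
      rw [lieb_split hab lam', lieb_split hab lam]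
      have hrest : ∑ j ∈ (Finset.univ.erase a).erase b, lam' j
          = ∑ j ∈ (Finset.univ.erase a).erase b, lam j := by
        refine Finset.sum_congr rfl fun j hj => ?_
        obtain ⟨hjb, hja, -⟩ : j ≠ b ∧ j ≠ a ∧ j ∈ Finset.univ := by
          simpa [Finset.mem_erase] using hj
        simp [hlam'_def, hja, hjb]
      have e1 : lam' a = 1 := by simp [hlam'_def]
      have e2 : lam' b = s - 1 := by simp [hlam'_def, Ne.symm hab]
      rw [hrest, e1, e2, hs_def]
      ring
    have h0' : ∀ j, 0 ≤ lam' j := by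
      intro j
      simp only [hlam'_def]
      split_ifs
      · exact zero_le_one
      · linarith
      · exact h0 j
    have h1' : ∀ j, lam' j ≤ 1 := by
      intro j
      simp only [hlam'_def]
      split_ifs
      · exact le_refl 1
      · linarith
      · exact h1 j
    have ha1 : lam' a = 1 := by simp [hlam'_def]
    have hsol' : LiebSol (N' + 1) (J' + 1) lam' := by
      refine lieb_peel_one a lam' ha1 (ih J' (Nat.lt_succ_self _) N' (by omega) _
        (fun j => h0' _) (fun j => h1' _) ?_)
      have hsp := Fin.sum_univ_succAbove lam' a
      rw [hsum', hsum, ha1] at hsp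
      push_cast at hsp ⊢
      linarith
    obtain ⟨G, hG, hsums⟩ := hsol'
    have hsa : ∑ n, ‖G n a‖ ^ 2 = 1 := by rw [hsums a]; exact ha1
    have hsb : ∑ n, ‖G n b‖ ^ 2 = s - 1 := by rw [hsums b]; simp [hlam'_def, Ne.symm hab]
    have hcross := lieb_cross_zero hG hab hsa
    have h2s : (0:ℝ) < 2 - s := by linarith
    have hα2 : Real.sqrt ((1 - lam b) / (2 - s)) ^ 2 = (1 - lam b) / (2 - s) :=
      Real.sq_sqrt (div_nonneg (by linarith [hlt b]) h2s.le)
    have hβ2 : Real.sqrt ((1 - lam a) / (2 - s)) ^ 2 = (1 - lam a) / (2 - s) :=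
      Real.sq_sqrt (div_nonneg (by linarith [hlt a]) h2s.le)
    refine lieb_rotate a b hab (Real.sqrt ((1 - lam b) / (2 - s)))
      (Real.sqrt ((1 - lam a) / (2 - s))) ?_ hG hcross lam ?_ ?_ ?_
    · rw [hα2, hβ2, ← add_div]
      rw [show (1 - lam b + (1 - lam a)) = 2 - s by rw [hs_def]; ring]
      exact div_self h2s.ne'
    · rw [hsa, hsb, hα2, hβ2]
      rw [hs_def] at h2s ⊢
      field_simp
      ring
    · rw [hsa, hsb, hα2, hβ2]
      rw [hs_def] at h2s ⊢
      field_simp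
      ring
    · intro j hja hjb
      rw [hsums j]
      simp [hlam'_def, hja, hjb]
end LiebMain

/-- **Lieb's lemma on prescribed occupation numbers**: if `0 ≤ λ_j ≤ 1` and `Σ_j λ_j = N`
with `N ≤ J`, then there is an orthonormal family `G⁽¹⁾, …, G⁽ᴺ⁾` in `ℂ^J` with
`Σ_n |G⁽ⁿ⁾_j|² = λ_j` for every `j`. -/
theorem lieb_occupation_numbers (N J : ℕ) (hN : 0 < N) (hNJ : N ≤ J)
    (lam : Fin J → ℝ) (hlam0 : ∀ j, 0 ≤ lam j) (hlam1 : ∀ j, lam j ≤ 1)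
    (hsum : ∑ j, lam j = (N : ℝ)) :
    ∃ G : Fin N → EuclideanSpace ℂ (Fin J), Orthonormal ℂ G ∧
      ∀ j : Fin J, ∑ n : Fin N, ‖G n j‖ ^ 2 = lam j :=
  lieb_main J N hNJ lam hlam0 hlam1 hsum
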